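/- Let V be a nonzero finite-dimensional real vector space and let g : [0,∞) → L(V) be a semigroup such that for each x ≥ 0 the map g(x) has exactly one eigenvalue λ(x) ∈ ℝ (i.e. the characteristic polynomial of g(x) is (X − λ(x))^{dim V}). Then there exists a nonzero vector v ∈ V such that g(x)v = λ(x)v for all x > 0. -/

import Mathlib

open Polynomial

private theorem aux_common_eigenvector :
    ∀ (n : ℕ) (V : Type*) [AddCommGroup V] [Module ℝ V] [FiniteDimensional ℝ V]
      [Nontrivial V], Module.finrank ℝ V ≤ n →
    ∀ (f : ℝ → Module.End ℝ V) (lam : ℝ → ℝ),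
    (∀ x y : ℝ, 0 < x → 0 < y → Commute (f x) (f y)) →
    (∀ x : ℝ, 0 < x → IsNilpotent (f x - lam x • 1)) →
    ∃ v : V, v ≠ 0 ∧ ∀ x : ℝ, 0 < x → f x v = lam x • v := by
  intro n
  induction n with
  | zero =>
    intro V _ _ _ _ hle f lam _ _
    have := Module.finrank_pos (R := ℝ) (M := V)
    omega
  | succ n ih =>
    intro V _ _ _ _ hle f lam hcomm hnil
    by_cases hall : ∀ x : ℝ, 0 < x → f x - lam x • 1 = 0
    · obtain ⟨v, hv⟩ := exists_ne (0 : V)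
      refine ⟨v, hv, fun x hx => ?_⟩
      have := hall x hx
      have h2 : f x = lam x • 1 := by rwa [sub_eq_zero] at this
      simp [h2]
    · push_neg at hall
      obtain ⟨x₀, hx₀, hN⟩ := hall
      set N : Module.End ℝ V := f x₀ - lam x₀ • 1 with hNdef
      -- kernel of N is nontrivial and proper
      have hNnil : IsNilpotent N := hnil x₀ hx₀
      have hker_ne_bot : LinearMap.ker N ≠ ⊥ := by
        intro h
        have hinj : Function.Injective N := LinearMap.ker_eq_bot.mp h
        obtain ⟨k, hk⟩ := hNnil
        have hkinj : Function.Injective ⇑(N ^ k) := by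
          clear hk
          induction k with
          | zero => exact fun a b hab => by simpa using hab
          | succ k ihk =>
            rw [pow_succ]
            exact fun a b hab => hinj (ihk hab)
        obtain ⟨v, hv⟩ := exists_ne (0 : V)
        apply hv
        apply hkinj
        simp [hk]
      have hker_ne_top : LinearMap.ker N ≠ ⊤ := by
        intro h
        apply hN
        ext v
        have : v ∈ LinearMap.ker N := h ▸ Submodule.mem_top
        simpa using this
      set W := LinearMap.ker N with hWdef
      haveI : Nontrivial W := Submodule.nontrivial_iff_ne_bot.mpr hker_ne_bot
      have hlt : Module.finrank ℝ W < Module.finrank ℝ V :=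
        Submodule.finrank_lt hker_ne_top
      have hWle : Module.finrank ℝ W ≤ n := by omega
      -- each f x (x > 0) maps W to W
      have hmaps : ∀ x : ℝ, 0 < x → ∀ v ∈ W, f x v ∈ W := by
        intro x hx v hv
        have hc : Commute (f x) N := by
          have h1 := hcomm x x₀ hx hx₀
          simp only [hNdef, Commute, SemiconjBy] at h1 ⊢
          rw [mul_sub, sub_mul, h1]
          congr 1
          ext w
          simp [LinearMap.smul_apply]
        have hv0 : N v = 0 := by simpa [hWdef] using hv
        have : N (f x v) = f x (N v) := by
          have := congrArg (fun T => T v) hc.symm.eq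
          simpa [Module.End.mul_apply] using this
        simp [hWdef, LinearMap.mem_ker, this, hv0]
      classical
      set f' : ℝ → Module.End ℝ W := fun x =>
        if hx : 0 < x then (f x).restrict (fun v hv => hmaps x hx v hv) else 1 with hf'def
      have hcoe : ∀ (x : ℝ) (hx : 0 < x) (v : W), ((f' x v : W) : V) = f x (v : V) := by
        intro x hx v
        simp [hf'def, dif_pos hx, LinearMap.restrict_coe_apply]
      have hcoeA : ∀ (x : ℝ) (hx : 0 < x) (v : W),
          (((f' x - lam x • 1) v : W) : V) = (f x - lam x • 1) (v : V) := by
        intro x hx v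
        simp [hcoe x hx, LinearMap.smul_apply]
      have hcoepow : ∀ (x : ℝ) (hx : 0 < x) (m : ℕ) (v : W),
          ((((f' x - lam x • 1) ^ m) v : W) : V) = ((f x - lam x • 1) ^ m) (v : V) := by
        intro x hx m
        induction m with
        | zero => simp
        | succ m ihm =>
          intro v
          rw [pow_succ, pow_succ]
          simp only [Module.End.mul_apply]
          rw [ihm, hcoeA x hx]
      have hcomm' : ∀ x y : ℝ, 0 < x → 0 < y → Commute (f' x) (f' y) := by
        intro x y hx hy
        have h1 := hcomm x y hx hy
        simp only [Commute, SemiconjBy] at h1 ⊢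
        ext v
        simp only [Module.End.mul_apply]
        rw [hcoe x hx, hcoe y hy, hcoe y hy, hcoe x hx]
        have := congrArg (fun T => T (v : V)) h1
        simpa [Module.End.mul_apply] using this
      have hnil' : ∀ x : ℝ, 0 < x → IsNilpotent (f' x - lam x • 1) := by
        intro x hx
        obtain ⟨k, hk⟩ := hnil x hx
        refine ⟨k, ?_⟩
        ext v
        rw [hcoepow x hx k v, hk]
        simp
      obtain ⟨v, hv, hfv⟩ := ih W hWle f' lam hcomm' hnil'
      refine ⟨(v : V), by simpa using hv, fun x hx => ?_⟩
      have := congrArg (Subtype.val) (hfv x hx)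
      rw [hcoe x hx] at this
      simpa using this

/-- If every `g x` of a semigroup on a nonzero finite-dimensional real
vector space has exactly one (real) eigenvalue `lam x`, then the semigroup has a common
eigenvector. -/
theorem common_eigenvector
    {V : Type*} [AddCommGroup V] [Module ℝ V] [FiniteDimensional ℝ V] [Nontrivial V]
    (g : ℝ → V →ₗ[ℝ] V)
    (hg0 : g 0 = LinearMap.id)
    (hgadd : ∀ x y : ℝ, 0 ≤ x → 0 ≤ y → g (x + y) = g x ∘ₗ g y)
    (lam : ℝ → ℝ)
    (hchar : ∀ x : ℝ, 0 ≤ x →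
      (g x).charpoly = (X - C (lam x)) ^ Module.finrank ℝ V) :
    ∃ v : V, v ≠ 0 ∧ ∀ x : ℝ, 0 < x → g x v = lam x • v := by
  have hcomm : ∀ x y : ℝ, 0 < x → 0 < y → Commute (g x) (g y) := by
    intro x y hx hy
    have h1 : g (x + y) = g x * g y := by
      rw [hgadd x y hx.le hy.le]; rfl
    have h2 : g (y + x) = g y * g x := by
      rw [hgadd y x hy.le hx.le]; rfl
    simp only [Commute, SemiconjBy]
    rw [← h1, ← h2, add_comm]
  have hnil : ∀ x : ℝ, 0 < x → IsNilpotent ((g x : Module.End ℝ V) - lam x • 1) := by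
    intro x hx
    refine ⟨Module.finrank ℝ V, ?_⟩
    have hCH := LinearMap.aeval_self_charpoly (g x)
    rw [hchar x hx.le] at hCH
    rw [map_pow, map_sub, aeval_X, aeval_C] at hCH
    have halg : (algebraMap ℝ (Module.End ℝ V)) (lam x) = lam x • 1 := by
      ext v; simp [Module.algebraMap_end_apply]
    rwa [halg] at hCH
  exact aux_common_eigenvector (Module.finrank ℝ V) V le_rfl g lam hcomm hnil
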